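/- Let S be a commutative semiring with 0 and 1, let n ≥ 1, let Σ be an alphabet, and let u, w ∈ Σ*. The monoid identity u = w holds in UT_n(S) if and only if, for every path π in the quiver Γ_{n,Σ}, the formal polynomials f_π^u and f_π^w are equal as polynomial functions over S. -/

import Mathlib

attribute [local instance] Classical.propDecidable

open scoped BigOperators

/-- The submonoid of upper triangular `n × n` matrices over `S`. -/
def UT (n : ℕ) (S : Type*) [CommSemiring S] : Submonoid (Matrix (Fin n) (Fin n) S) where
  carrier := {A | ∀ i j : Fin n, j < i → A i j = 0}
  one_mem' := fun i j hij => Matrix.one_apply_ne (ne_of_gt hij)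
  mul_mem' := by
    intro a b ha hb i j hij
    rw [Matrix.mul_apply]
    apply Finset.sum_eq_zero
    intro k _
    rcases lt_or_ge k i with h | h
    · rw [ha i k h, zero_mul]
    · rw [hb k j (lt_of_lt_of_le hij h), mul_zero]

/-- A path in the loop-free quiver `Γ_{n,Σ}`: a start vertex together with a list of
labelled edges, the visited vertices being strictly increasing. -/
structure QPath (n : ℕ) (A : Type*) where
  start : Fin n
  steps : List (A × Fin n)
  chain : List.Chain' (· < ·) (start :: steps.map Prod.snd)

namespace QPath

variable {n : ℕ} {A : Type*}

/-- The `j`-th vertex visited by the path. -/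
def vtx (π : QPath n A) (j : ℕ) : Fin n :=
  (π.start :: π.steps.map Prod.snd).getD j π.start

/-- The label of a path. -/
def label (π : QPath n A) : List A := π.steps.map Prod.fst

/-- The final vertex of a path. -/
def last (π : QPath n A) : Fin n := π.vtx π.steps.length

end QPath

/-- `p` is an occurrence of the path `π` in the word `w`. -/
def IsOcc {n : ℕ} {A : Type*} (π : QPath n A) (w : List A)
    (p : Fin π.steps.length → Fin w.length) : Prop :=
  (∀ j k, j < k → p j < p k) ∧ ∀ j, w.get (p j) = (π.steps.get j).1

/-- The monomial corresponding to an occurrence. -/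
noncomputable def occMonomial (S : Type*) [CommSemiring S] {n : ℕ} {A : Type*}
    (π : QPath n A) (w : List A) (p : Fin π.steps.length → Fin w.length) :
    MvPolynomial (A × Fin n) S :=
  ∏ i : Fin w.length,
    if ∃ j, p j = i then 1
    else MvPolynomial.X (w.get i, π.vtx (Finset.univ.filter (fun j => p j < i)).card)

/-- The formal polynomial `f_π^w`. -/
noncomputable def fPoly (S : Type*) [CommSemiring S] {n : ℕ} {A : Type*}
    (π : QPath n A) (w : List A) : MvPolynomial (A × Fin n) S :=
  ∑ p ∈ Finset.univ.filter (IsOcc π w), occMonomial S π w p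

namespace QPath
variable {n : ℕ} {A : Type*}

/-- The initial segment of a path consisting of its first `j` edges. -/
def take (π : QPath n A) (j : ℕ) : QPath n A :=
  ⟨π.start, π.steps.take j, by
    have h : (π.start :: (π.steps.take j).map Prod.snd) =
        (π.start :: π.steps.map Prod.snd).take (j + 1) := by
      simp [List.map_take]
    rw [h]
    exact π.chain.take _⟩

/-- The final segment of a path obtained by removing its first `j` edges. -/
def drop (π : QPath n A) (j : ℕ) : QPath n A :=
  ⟨π.vtx j, π.steps.drop j, by
    rcases le_or_gt j π.steps.length with hj | hj
    · have hlen : j < (π.start :: π.steps.map Prod.snd).length := by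
        simp; omega
      have h : π.vtx j :: (π.steps.drop j).map Prod.snd =
          (π.start :: π.steps.map Prod.snd).drop j := by
        rw [List.map_drop, List.drop_eq_getElem_cons hlen, List.drop_succ_cons]
        congr 1
        exact List.getD_eq_getElem _ _ hlen
      rw [h]
      exact π.chain.drop _
    · have h : π.steps.drop j = [] := List.drop_eq_nil_of_le (by omega)
      rw [h]
      first | exact List.isChain_singleton _ | exact List.chain'_singleton _ | simp [List.IsChain.singleton]⟩

end QPath

section Aux
attribute [local instance] Classical.propDecidable
variable {n : ℕ} {A : Type*}

namespace QPath

lemma vtx_eq_get (π : QPath n A) {r : ℕ} (hr : r ≤ π.steps.length) :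
    π.vtx r = (π.start :: π.steps.map Prod.snd).get ⟨r, by simp; omega⟩ := by
  rw [vtx, List.getD_eq_getElem]
  · simp
  · simp; omega

lemma vtx_lt_vtx (π : QPath n A) {r r' : ℕ} (h : r < r') (h' : r' ≤ π.steps.length) :
    π.vtx r < π.vtx r' := by
  rw [π.vtx_eq_get (le_of_lt (lt_of_lt_of_le h h')), π.vtx_eq_get h']
  have hp : (π.start :: π.steps.map Prod.snd).Pairwise (· < ·) :=
    List.isChain_iff_pairwise.mp π.chain
  exact List.pairwise_iff_get.mp hp _ _ (by simp [Fin.lt_def]; omega)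

lemma vtx_mono (π : QPath n A) {r r' : ℕ} (h : r ≤ r') (h' : r' ≤ π.steps.length) :
    π.vtx r ≤ π.vtx r' := by
  rcases eq_or_lt_of_le h with rfl | hlt
  · exact le_refl _
  · exact le_of_lt (π.vtx_lt_vtx hlt h')

lemma vtx_injOn (π : QPath n A) {r r' : ℕ} (h : r ≤ π.steps.length)
    (h' : r' ≤ π.steps.length) (he : π.vtx r = π.vtx r') : r = r' := by
  rcases lt_trichotomy r r' with hlt | rfl | hlt
  · exact absurd he (ne_of_lt (π.vtx_lt_vtx hlt h'))
  · rfl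
  · exact absurd he.symm (ne_of_lt (π.vtx_lt_vtx hlt h))

lemma vtx_zero (π : QPath n A) : π.vtx 0 = π.start := rfl

lemma vtx_succ_get (π : QPath n A) {r : ℕ} (hr : r < π.steps.length) :
    π.vtx (r + 1) = (π.steps.get ⟨r, hr⟩).2 := by
  rw [π.vtx_eq_get (by omega)]
  simp

/-- Two paths with equal start and steps are equal. -/
lemma ext' {π π' : QPath n A} (h1 : π.start = π'.start) (h2 : π.steps = π'.steps) :
    π = π' := by
  cases π; cases π'; simp_all

end QPath

end Aux
section Aux2
attribute [local instance] Classical.propDecidable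
open Finset

lemma card_filter_lt_fin (k : ℕ) : ∀ (r : ℕ), r ≤ k →
    (Finset.univ.filter fun j : Fin k => (j : ℕ) < r).card = r := by
  intro r
  induction r with
  | zero => intro _; simp
  | succ r ih =>
    intro hr
    have h1 : (Finset.univ.filter fun j : Fin k => (j : ℕ) < r + 1) =
        insert ⟨r, by omega⟩ (Finset.univ.filter fun j : Fin k => (j : ℕ) < r) := by
      ext j
      simp [Fin.ext_iff]
      omega
    rw [h1, Finset.card_insert_of_notMem (by simp), ih (by omega)]

lemma length_filter_eq_card {α : Type*} (P : α → Prop) :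
    ∀ (L : List α), (L.filter (fun a => P a)).length =
      (Finset.univ.filter (fun j : Fin L.length => P (L.get j))).card
  | [] => by simp
  | a :: L => by
    simp only [List.length_cons]
    rw [Finset.card_filter, Fin.sum_univ_succ]
    simp only [List.get_eq_getElem, Fin.val_zero, Fin.val_succ,
      List.getElem_cons_zero, List.getElem_cons_succ]
    rw [← Finset.card_filter]
    have hres := length_filter_eq_card P L
    simp only [List.get_eq_getElem] at hres
    rw [← hres, List.filter_cons]
    by_cases h : P a <;> simp [h] <;> try omega

lemma length_filter_lt_succ {m : ℕ} (t : Fin m) : ∀ (L : List (Fin m)),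
    (L.filter fun s : Fin m => (s : ℕ) < (t : ℕ) + 1).length =
      (L.filter fun s : Fin m => (s : ℕ) < (t : ℕ)).length + L.count t
  | [] => by simp
  | a :: L => by
    have ih := length_filter_lt_succ t L
    rw [List.filter_cons, List.filter_cons, List.count_cons]
    by_cases h : a = t
    · subst h
      have b1 : (decide ((a : ℕ) < (a : ℕ) + 1)) = true := by simp
      have b2 : (decide ((a : ℕ) < (a : ℕ))) = false := by simp
      have b3 : (a == a) = true := by simp
      simp only [b1, b2, b3, ih, ite_true, ite_false, if_true, if_false, List.length_cons,
          Bool.false_eq_true]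
      try omega
    · have b3 : (a == t) = false := by simpa using h
      by_cases h1 : (a : ℕ) < (t : ℕ)
      · have b1 : (decide ((a : ℕ) < (t : ℕ) + 1)) = true := by simp; omega
        have b2 : (decide ((a : ℕ) < (t : ℕ))) = true := by simpa using h1
        simp only [b1, b2, b3, ih, ite_true, ite_false, if_true, if_false, List.length_cons,
          Bool.false_eq_true]
        omega
      · have hne : (a : ℕ) ≠ (t : ℕ) := fun hc => h (Fin.ext hc)
        have b1 : (decide ((a : ℕ) < (t : ℕ) + 1)) = false := by
          simp only [decide_eq_false_iff_not]; omega
        have b2 : (decide ((a : ℕ) < (t : ℕ))) = false := by simpa using h1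
        simp only [b1, b2, b3, ih, ite_true, ite_false, if_true, if_false, List.length_cons,
          Bool.false_eq_true]
        omega

lemma length_filter_lt_get {α : Type*} [LinearOrder α] :
    ∀ {L : List α}, L.Pairwise (· < ·) → ∀ (r : ℕ) (hr : r < L.length),
      (L.filter fun s => s < L.get ⟨r, hr⟩).length = r
  | [], _, r, hr => by simp at hr
  | a :: L, hp, 0, hr => by
    rw [List.pairwise_cons] at hp
    have : ∀ x ∈ a :: L, ¬ (x < a) := by
      intro x hx
      rcases List.mem_cons.mp hx with rfl | hx
      · exact lt_irrefl x
      · exact not_lt_of_gt (hp.1 x hx)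
    simp only [List.get]
    rw [List.filter_eq_nil_iff.mpr (by intro x hx; simpa using this x hx)]
    rfl
  | a :: L, hp, r + 1, hr => by
    rw [List.pairwise_cons] at hp
    have hr' : r < L.length := by simpa using hr
    have hm : L.get ⟨r, hr'⟩ ∈ L := List.get_mem L ⟨r, hr'⟩
    have ha : a < L.get ⟨r, hr'⟩ := hp.1 _ hm
    have hd : decide (a < L.get ⟨r, hr'⟩) = true := by simpa using ha
    simp only [List.get_cons_succ]
    rw [List.filter_cons, hd, if_pos rfl, List.length_cons,
      length_filter_lt_get hp.2 r hr']

lemma length_filter_lt_get_fin {m : ℕ} {L : List (Fin m)} (hp : L.Pairwise (· < ·))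
    (r : Fin L.length) :
    (L.filter fun s : Fin m => (s : ℕ) < ((L.get r : Fin m) : ℕ)).length = (r : ℕ) := by
  have h1 := length_filter_lt_get hp (r : ℕ) r.isLt
  rw [← h1]
  congr 1
  apply List.filter_congr
  intro a _
  apply decide_eq_decide.mpr
  rw [show (⟨(r : ℕ), r.isLt⟩ : Fin L.length) = r from rfl]
  exact (Fin.lt_def).symm

lemma length_filter_eq_card' {α : Type*} (f : α → Bool) :
    ∀ (L : List α), (L.filter f).length =
      (Finset.univ.filter (fun j : Fin L.length => f (L.get j) = true)).card
  | [] => by simp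
  | a :: L => by
    simp only [List.length_cons]
    rw [Finset.card_filter, Fin.sum_univ_succ]
    simp only [List.get_eq_getElem, Fin.val_zero, Fin.val_succ,
      List.getElem_cons_zero, List.getElem_cons_succ]
    rw [← Finset.card_filter]
    have hres := length_filter_eq_card' f L
    simp only [List.get_eq_getElem] at hres
    rw [← hres, List.filter_cons]
    by_cases h : f a = true <;> simp [h] <;> try omega

end Aux2
section Aux3
attribute [local instance] Classical.propDecidable
open Finset

variable {S : Type*} [CommSemiring S] {n : ℕ} {A : Type*}

/-- The product of matrix entries along a vertex sequence reading the word `w`. -/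
def wordFn (M : A → Matrix (Fin n) (Fin n) S) (w : List A)
    (v : Fin (w.length + 1) → Fin n) : S :=
  ∏ t : Fin w.length, (M (w.get t)) (v t.castSucc) (v t.succ)

/-- The product of the entries of the matrices along the edges of a path. -/
def pathWt (M : A → Matrix (Fin n) (Fin n) S) (π : QPath n A) : S :=
  ∏ j : Fin π.steps.length, (M ((π.steps.get j).1)) (π.vtx j) (π.vtx (j + 1))

lemma wordFn_cons (M : A → Matrix (Fin n) (Fin n) S) (a : A) (w : List A)
    (x : Fin n) (v' : Fin (w.length + 1) → Fin n) :
    wordFn M (a :: w) (Fin.cons x v') = (M a) x (v' 0) * wordFn M w v' := by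
  rw [wordFn, wordFn]
  simp only [List.length_cons]
  rw [Fin.prod_univ_succ]
  have e1 : (Fin.cons (α := fun _ : Fin (w.length + 2) => Fin n) x v'
      (Fin.castSucc (0 : Fin (w.length + 1)))) = x := by
    rw [Fin.castSucc_zero]
    exact Fin.cons_zero _ _
  have e2 : (Fin.cons (α := fun _ : Fin (w.length + 2) => Fin n) x v'
      (Fin.succ (0 : Fin (w.length + 1)))) = v' 0 := Fin.cons_succ _ _ _
  have e3 : ((a :: w).get (0 : Fin (w.length + 1))) = a := rfl
  rw [e1, e2, e3]
  refine congrArg (fun z => M a x (v' 0) * z) (Finset.prod_congr rfl (fun t _ => ?_))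
  have f1 : ((a :: w).get (Fin.succ t)) = w.get t := rfl
  have f2 : (Fin.cons (α := fun _ : Fin (w.length + 2) => Fin n) x v'
      (Fin.castSucc (Fin.succ t))) = v' t.castSucc := by
    rw [← Fin.succ_castSucc]
    exact Fin.cons_succ _ _ _
  have f3 : (Fin.cons (α := fun _ : Fin (w.length + 2) => Fin n) x v'
      (Fin.succ (Fin.succ t))) = v' t.succ := Fin.cons_succ _ _ _
  rw [f1, f2, f3]

lemma entry_eq_sum (M : A → Matrix (Fin n) (Fin n) S) :
    ∀ (w : List A) (i j : Fin n),
      ((w.map M).prod) i j =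
        ∑ v : Fin (w.length + 1) → Fin n,
          if v 0 = i ∧ v (Fin.last w.length) = j then wordFn M w v else 0
  | [] => by
    intro i j
    rw [List.map_nil, List.prod_nil]
    show (1 : Matrix (Fin n) (Fin n) S) i j = ∑ v : Fin 1 → Fin n,
      if v 0 = i ∧ v (Fin.last 0) = j then wordFn M [] v else 0
    have h1 : ∑ v : Fin 1 → Fin n,
        (if v 0 = i ∧ v (Fin.last 0) = j then wordFn M [] v else 0) =
        ∑ x : Fin n, (if x = i ∧ x = j then 1 else 0) := by
      apply Fintype.sum_equiv (Equiv.funUnique (Fin 1) (Fin n))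
      intro v
      have : wordFn M [] v = 1 := by simp [wordFn]
      simp [Equiv.funUnique, this]
    rw [h1]
    rw [Finset.sum_eq_single i]
    · simp [Matrix.one_apply]
    · intro k _ hk
      exact if_neg (fun hc => hk hc.1)
    · simp
  | a :: w => by
    intro i j
    rw [List.map_cons, List.prod_cons, Matrix.mul_apply]
    have ih := entry_eq_sum M w
    simp_rw [ih]
    show _ = ∑ v : Fin (w.length + 2) → Fin n,
      (if v 0 = i ∧ v (Fin.last (w.length + 1)) = j then wordFn M (a :: w) v else 0)
    -- RHS: reindex by Fin.cons
    rw [← Equiv.sum_comp (Fin.consEquiv (fun _ : Fin (w.length + 2) => Fin n))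
      (fun v : Fin (w.length + 2) → Fin n =>
        if v 0 = i ∧ v (Fin.last (w.length + 1)) = j then wordFn M (a :: w) v else 0)]
    rw [Fintype.sum_prod_type]
    have key : ∀ x (v' : Fin (w.length + 1) → Fin n),
        (if (Fin.consEquiv (fun _ : Fin (w.length + 2) => Fin n)) (x, v') 0 = i ∧
            (Fin.consEquiv (fun _ : Fin (w.length + 2) => Fin n)) (x, v') (Fin.last (w.length + 1)) = j
          then wordFn M (a :: w) ((Fin.consEquiv (fun _ : Fin (w.length + 2) => Fin n)) (x, v'))
          else 0) =
        (if x = i ∧ v' (Fin.last w.length) = j then (M a) x (v' 0) * wordFn M w v' else 0) := by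
      intro x v'
      have hc : (Fin.consEquiv (fun _ : Fin (w.length + 2) => Fin n)) (x, v') = Fin.cons x v' := rfl
      rw [hc, wordFn_cons]
      have h0 : (Fin.cons (α := fun _ : Fin (w.length + 2) => Fin n) x v' 0) = x :=
        Fin.cons_zero _ _
      have hl : (Fin.cons (α := fun _ : Fin (w.length + 2) => Fin n) x v'
          (Fin.last (w.length + 1))) = v' (Fin.last w.length) := by
        rw [← Fin.succ_last]
        exact Fin.cons_succ _ _ _
      rw [h0, hl]
    simp_rw [key]
    -- now both sides are sums over k/x and v'
    rw [Finset.sum_comm]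
    -- LHS : ∑ k, M a i k * ∑ v', ite
    have lhs : ∀ k, (M a) i k * (∑ v' : Fin (w.length + 1) → Fin n,
        if v' 0 = k ∧ v' (Fin.last w.length) = j then wordFn M w v' else 0) =
        ∑ v' : Fin (w.length + 1) → Fin n,
          (if v' 0 = k ∧ v' (Fin.last w.length) = j then (M a) i k * wordFn M w v' else 0) := by
      intro k
      rw [Finset.mul_sum]
      apply Finset.sum_congr rfl
      intro v' _
      rw [mul_ite, mul_zero]
    simp_rw [lhs]
    rw [Finset.sum_comm]
    apply Finset.sum_congr rfl
    intro v' _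
    trans (if v' (Fin.last w.length) = j then (M a) i (v' 0) * wordFn M w v' else 0)
    · rw [Finset.sum_eq_single (v' 0)]
      · by_cases hq : v' (Fin.last w.length) = j <;> simp [hq]
      · intro k _ hk
        exact if_neg (fun hc => hk hc.1.symm)
      · simp
    · rw [Finset.sum_eq_single i]
      · by_cases hq : v' (Fin.last w.length) = j <;> simp [hq]
      · intro x _ hx
        exact if_neg (fun hc => hx hc.1)
      · simp

end Aux3
section Aux4
attribute [local instance] Classical.propDecidable
open Finset

variable {n : ℕ} {A : Type*}

/-- The list of positions at which `v` strictly increases. -/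
def incList (w : List A) (v : Fin (w.length + 1) → Fin n) : List (Fin w.length) :=
  (List.finRange w.length).filter (fun t : Fin w.length => v t.castSucc < v t.succ)

lemma incList_pairwise (w : List A) (v : Fin (w.length + 1) → Fin n) :
    (incList w v).Pairwise (· < ·) :=
  List.Pairwise.sublist List.filter_sublist (List.pairwise_lt_finRange _)

lemma incList_nodup (w : List A) (v : Fin (w.length + 1) → Fin n) :
    (incList w v).Nodup :=
  (incList_pairwise w v).imp (fun h => ne_of_lt h)

lemma mem_incList {w : List A} {v : Fin (w.length + 1) → Fin n} {t : Fin w.length} :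
    t ∈ incList w v ↔ v t.castSucc < v t.succ := by
  simp [incList, List.mem_filter, List.mem_finRange]

/-- The path associated to a monotone vertex sequence. -/
def pOf (w : List A) (v : Fin (w.length + 1) → Fin n) : QPath n A :=
  if hv : Monotone v then
    { start := v 0
      steps := (incList w v).map (fun t => (w.get t, v t.succ))
      chain := by
        refine List.isChain_iff_pairwise.mpr ?_
        rw [List.map_map]
        refine List.pairwise_cons.mpr ⟨?_, ?_⟩
        · intro b hb
          rcases List.mem_map.mp hb with ⟨t, ht, rfl⟩
          have h1 : v t.castSucc < v t.succ := mem_incList.mp ht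
          exact lt_of_le_of_lt (hv (Fin.zero_le _)) h1
        · rw [List.pairwise_map]
          refine List.Pairwise.imp_of_mem ?_ (incList_pairwise w v)
          intro a b ha hb hab
          have hb' : v b.castSucc < v b.succ := mem_incList.mp hb
          have h2 : v a.succ ≤ v b.castSucc := by
            apply hv
            simp only [Fin.le_def, Fin.val_succ, Fin.coe_castSucc]
            exact hab
          exact lt_of_le_of_lt h2 hb' }
  else ⟨v 0, [], List.isChain_singleton _⟩

lemma pOf_start (w : List A) (v : Fin (w.length + 1) → Fin n) :
    (pOf w v).start = v 0 := by
  rw [pOf]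
  split <;> rfl

lemma pOf_steps {w : List A} {v : Fin (w.length + 1) → Fin n} (hv : Monotone v) :
    (pOf w v).steps = (incList w v).map (fun t => (w.get t, v t.succ)) := by
  rw [pOf, dif_pos hv]

lemma pOf_vtx {w : List A} {v : Fin (w.length + 1) → Fin n} (hv : Monotone v) :
    ∀ t : Fin (w.length + 1),
      v t = (pOf w v).vtx
        (((incList w v).filter (fun s : Fin w.length => (s : ℕ) < (t : ℕ))).length) := by
  intro t
  induction t using Fin.induction with
  | zero =>
    have h0 : ((incList w v).filter
        (fun s : Fin w.length => (s : ℕ) < ((0 : Fin (w.length + 1)) : ℕ))).length = 0 := by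
      rw [List.filter_eq_nil_iff.mpr]
      · rfl
      · intro s _
        simp
    rw [h0, QPath.vtx_zero, pOf_start]
  | succ t ih =>
    have hcs : (((t.castSucc : Fin (w.length + 1))) : ℕ) = (t : ℕ) := rfl
    have hsc : (((t.succ : Fin (w.length + 1))) : ℕ) = (t : ℕ) + 1 := rfl
    rw [hsc, length_filter_lt_succ t (incList w v)]
    rw [hcs] at ih
    set L := incList w v with hL
    set c := (L.filter (fun s : Fin w.length => (s : ℕ) < (t : ℕ))).length with hc
    by_cases h : v t.castSucc < v t.succ
    · have htL : t ∈ L := mem_incList.mpr h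
      have hcount : L.count t = 1 := List.count_eq_one_of_mem (incList_nodup w v) htL
      rcases List.mem_iff_get.mp htL with ⟨r, hr⟩
      have hcr : c = (r : ℕ) := by
        have hp : L.Pairwise (· < ·) := incList_pairwise w v
        have h1 := length_filter_lt_get_fin hp r
        rw [hr] at h1
        rw [hc, ← h1]
      have hlen : c < L.length := by rw [hcr]; exact r.isLt
      have hsteps : (pOf w v).steps.length = L.length := by
        rw [pOf_steps hv, List.length_map]
      have : (pOf w v).vtx (c + 1) = v t.succ := by
        rw [QPath.vtx_succ_get _ (by rw [hsteps]; exact hlen)]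
        have hget : (pOf w v).steps.get ⟨c, by rw [hsteps]; exact hlen⟩ =
            (w.get (L.get ⟨c, hlen⟩), v (L.get ⟨c, hlen⟩).succ) := by
          simp [pOf_steps hv]
          exact ⟨rfl, rfl⟩
        rw [hget]
        have : L.get ⟨c, hlen⟩ = t := by
          have : (⟨c, hlen⟩ : Fin L.length) = r := by
            apply Fin.ext
            exact hcr
          rw [this, hr]
        rw [this]
      rw [hcount, this]
    · have hcount : L.count t = 0 := by
        rw [List.count_eq_zero]
        intro hmem
        exact h (mem_incList.mp hmem)
      have heq : v t.succ = v t.castSucc := by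
        have h1 : v t.castSucc ≤ v t.succ := hv (by
          simp only [Fin.le_def, Fin.val_succ, Fin.coe_castSucc]; omega)
        exact le_antisymm (not_lt.mp h) h1
      rw [hcount, Nat.add_zero, heq, ih]

lemma pOf_last {w : List A} {v : Fin (w.length + 1) → Fin n} (hv : Monotone v) :
    (pOf w v).last = v (Fin.last w.length) := by
  rw [QPath.last, pOf_vtx hv (Fin.last w.length)]
  congr 1
  rw [pOf_steps hv, List.length_map,
    List.filter_eq_self.mpr (by intro s _; simpa using s.isLt)]

/-- The occurrence associated to a monotone vertex sequence. -/
noncomputable def pOcc (w : List A) (v : Fin (w.length + 1) → Fin n) :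
    Fin (pOf w v).steps.length → Fin w.length := fun j =>
  if hv : Monotone v then
    (incList w v).get (Fin.cast (by rw [pOf_steps hv, List.length_map]) j)
  else
    Fin.elim0 (Fin.cast (by simp [pOf, hv]) j)

/-- The vertex sequence associated to a path and an occurrence. -/
def vq (π : QPath n A) {m : ℕ} (p : Fin π.steps.length → Fin m) :
    Fin (m + 1) → Fin n := fun t =>
  π.vtx ((Finset.univ.filter (fun j => ((p j : ℕ) < (t : ℕ)))).card)

end Aux4
section Aux5
attribute [local instance] Classical.propDecidable
open Finset

variable {n : ℕ} {A : Type*}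

/-- Number of occurrence positions strictly below `r`. -/
def cnt {k m : ℕ} (p : Fin k → Fin m) (r : ℕ) : ℕ :=
  (Finset.univ.filter fun j => (p j : ℕ) < r).card

lemma vq_eq (π : QPath n A) {m : ℕ} (p : Fin π.steps.length → Fin m)
    (t : Fin (m + 1)) : vq π p t = π.vtx (cnt p (t : ℕ)) := rfl

lemma cnt_le {k m : ℕ} (p : Fin k → Fin m) (r : ℕ) : cnt p r ≤ k := by
  calc cnt p r ≤ (Finset.univ : Finset (Fin k)).card := Finset.card_filter_le _ _
  _ = k := by simp

lemma cnt_mono {k m : ℕ} (p : Fin k → Fin m) {r r' : ℕ} (h : r ≤ r') :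
    cnt p r ≤ cnt p r' := by
  apply Finset.card_le_card
  intro j hj
  simp only [Finset.mem_filter, Finset.mem_univ, true_and] at hj ⊢
  omega

lemma cnt_zero {k m : ℕ} (p : Fin k → Fin m) : cnt p 0 = 0 := by
  rw [cnt, Finset.card_eq_zero, Finset.filter_eq_empty_iff]
  intro j _
  omega

lemma cnt_top {k m : ℕ} (p : Fin k → Fin m) : cnt p m = k := by
  rw [cnt, Finset.filter_true_of_mem (fun j _ => (p j).isLt), Finset.card_univ,
    Fintype.card_fin]

lemma cnt_apply {k m : ℕ} {p : Fin k → Fin m} (hp : StrictMono p) (j : Fin k) :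
    cnt p ((p j : ℕ)) = (j : ℕ) := by
  rw [cnt]
  have h1 : (Finset.univ.filter fun j' : Fin k => (p j' : ℕ) < (p j : ℕ)) =
      (Finset.univ.filter fun j' : Fin k => (j' : ℕ) < (j : ℕ)) := by
    apply Finset.filter_congr
    intro j' _
    constructor
    · intro h
      exact hp.lt_iff_lt.mp h
    · intro h
      exact hp.lt_iff_lt.mpr h
  rw [h1, card_filter_lt_fin k (j : ℕ) (le_of_lt j.isLt)]

lemma cnt_apply_succ {k m : ℕ} {p : Fin k → Fin m} (hp : StrictMono p) (j : Fin k) :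
    cnt p ((p j : ℕ) + 1) = (j : ℕ) + 1 := by
  rw [cnt]
  have h1 : (Finset.univ.filter fun j' : Fin k => (p j' : ℕ) < (p j : ℕ) + 1) =
      (Finset.univ.filter fun j' : Fin k => (j' : ℕ) < (j : ℕ) + 1) := by
    apply Finset.filter_congr
    intro j' _
    have : ((p j' : ℕ) < (p j : ℕ) + 1) ↔ (p j' ≤ p j) := by
      rw [Fin.le_def]; omega
    rw [this]
    have : ((j' : ℕ) < (j : ℕ) + 1) ↔ (j' ≤ j) := by
      rw [Fin.le_def]; omega
    rw [this]
    exact hp.le_iff_le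
  rw [h1, card_filter_lt_fin k ((j : ℕ) + 1) j.isLt]

lemma cnt_no {k m : ℕ} (p : Fin k → Fin m) {t : Fin m} (hno : ∀ j, p j ≠ t) :
    cnt p ((t : ℕ) + 1) = cnt p (t : ℕ) := by
  rw [cnt, cnt]
  congr 1
  apply Finset.filter_congr
  intro j _
  have : (p j : ℕ) ≠ (t : ℕ) := fun hc => hno j (Fin.ext hc)
  omega

lemma vq_monotone (π : QPath n A) {m : ℕ} (p : Fin π.steps.length → Fin m) :
    Monotone (vq π p) := by
  intro t t' h
  rw [vq_eq, vq_eq]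
  exact π.vtx_mono (cnt_mono p (Fin.le_def.mp h)) (cnt_le p _)

lemma vq_zero (π : QPath n A) {m : ℕ} (p : Fin π.steps.length → Fin m) :
    vq π p 0 = π.start := by
  rw [vq_eq]
  have : ((0 : Fin (m + 1)) : ℕ) = 0 := rfl
  rw [this, cnt_zero, QPath.vtx_zero]

lemma vq_last (π : QPath n A) {m : ℕ} (p : Fin π.steps.length → Fin m) :
    vq π p (Fin.last m) = π.last := by
  rw [vq_eq, Fin.val_last, cnt_top, QPath.last]

lemma isOcc_strictMono {π : QPath n A} {w : List A}
    {p : Fin π.steps.length → Fin w.length} (hocc : IsOcc π w p) : StrictMono p :=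
  fun _ _ h => hocc.1 _ _ h

/-- The increase positions of `vq π p` are exactly the occurrence positions. -/
lemma incList_vq {π : QPath n A} {w : List A}
    {p : Fin π.steps.length → Fin w.length} (hocc : IsOcc π w p) :
    incList w (vq π p) = List.ofFn p := by
  have hp : StrictMono p := isOcc_strictMono hocc
  haveI : IsAntisymm (Fin w.length) (· < ·) :=
    ⟨fun a b h1 h2 => absurd h1 (lt_asymm h2)⟩
  refine (fun hperm h1 h2 => List.Perm.eq_of_pairwise' (r := (· < ·)) h1 h2 hperm) ?_ ?_ ?_
  · apply List.perm_of_nodup_nodup_toFinset_eq (incList_nodup w _)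
    · exact List.Pairwise.imp (fun h => h) (List.pairwise_ofFn.mpr (fun a b h => (hp h).ne))
    · ext t
      rw [List.mem_toFinset, List.mem_toFinset, mem_incList, List.mem_ofFn]
      constructor
      · intro h
        by_contra hno
        have : ∀ j, p j ≠ t := fun j hc => hno ⟨j, hc⟩
        have hc := cnt_no p this
        rw [vq_eq, vq_eq] at h
        have hcs : ((t.castSucc : Fin (w.length + 1)) : ℕ) = (t : ℕ) := rfl
        have hsc : ((t.succ : Fin (w.length + 1)) : ℕ) = (t : ℕ) + 1 := rfl
        rw [hcs, hsc, hc] at h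
        exact lt_irrefl _ h
      · rintro ⟨j, rfl⟩
        rw [vq_eq, vq_eq]
        have hcs : (((p j).castSucc : Fin (w.length + 1)) : ℕ) = ((p j) : ℕ) := rfl
        have hsc : (((p j).succ : Fin (w.length + 1)) : ℕ) = ((p j) : ℕ) + 1 := rfl
        rw [hcs, hsc, cnt_apply hp, cnt_apply_succ hp]
        exact π.vtx_lt_vtx (by omega) (by omega)
  · exact incList_pairwise w _
  · exact List.pairwise_ofFn.mpr (fun a b h => hp h)

lemma pOf_vq {π : QPath n A} {w : List A}
    {p : Fin π.steps.length → Fin w.length} (hocc : IsOcc π w p) :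
    pOf w (vq π p) = π := by
  have hp : StrictMono p := isOcc_strictMono hocc
  apply QPath.ext'
  · rw [pOf_start, vq_zero]
  · rw [pOf_steps (vq_monotone π p), incList_vq hocc, List.map_ofFn]
    apply List.ext_get (by simp)
    intro idx h1 h2
    rw [List.get_ofFn]
    show (w.get (p ⟨idx, h2⟩), vq π p (p ⟨idx, h2⟩).succ) = π.steps.get ⟨idx, h2⟩
    have hsnd : vq π p (p ⟨idx, h2⟩).succ = (π.steps.get ⟨idx, h2⟩).2 := by
      rw [vq_eq]
      have hsc : (((p ⟨idx, h2⟩).succ : Fin (w.length + 1)) : ℕ) =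
          ((p ⟨idx, h2⟩) : ℕ) + 1 := rfl
      rw [hsc, cnt_apply_succ hp ⟨idx, h2⟩]
      rw [show ((⟨idx, h2⟩ : Fin π.steps.length) : ℕ) = idx from rfl]
      exact QPath.vtx_succ_get π h2
    rw [hsnd, hocc.2 ⟨idx, h2⟩]

end Aux5
section Aux6
attribute [local instance] Classical.propDecidable
open Finset

variable {S : Type*} [CommSemiring S] {n : ℕ} {A : Type*}

lemma pOcc_eq {w : List A} {v : Fin (w.length + 1) → Fin n} (hv : Monotone v)
    (j : Fin (pOf w v).steps.length) :
    pOcc w v j = (incList w v).get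
      (Fin.cast (by rw [pOf_steps hv, List.length_map]) j) := by
  rw [pOcc, dif_pos hv]

lemma vq_pOcc {w : List A} {v : Fin (w.length + 1) → Fin n} (hv : Monotone v) :
    vq (pOf w v) (pOcc w v) = v := by
  funext t
  rw [vq_eq]
  have hlen : (pOf w v).steps.length = (incList w v).length := by
    rw [pOf_steps hv, List.length_map]
  have hcnt : cnt (pOcc w v) (t : ℕ) =
      ((incList w v).filter fun s : Fin w.length => (s : ℕ) < (t : ℕ)).length := by
    rw [length_filter_eq_card' (fun s : Fin w.length => decide ((s : ℕ) < (t : ℕ))) (incList w v), cnt]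
    apply Finset.card_nbij' (fun j => Fin.cast hlen j) (fun j => Fin.cast hlen.symm j)
    · intro a ha
      simp only [Finset.coe_filter, Finset.mem_filter, Finset.mem_univ, true_and,
        Set.mem_setOf_eq] at ha ⊢
      rw [pOcc_eq hv] at ha
      simpa using ha
    · intro a ha
      simp only [Finset.coe_filter, Finset.mem_filter, Finset.mem_univ, true_and,
        decide_eq_true_eq, Set.mem_setOf_eq] at ha ⊢
      rw [pOcc_eq hv]
      convert ha using 3
      simp
    · intro a _
      apply Fin.ext
      simp
    · intro a _
      apply Fin.ext
      simp
  rw [hcnt, ← pOf_vtx hv t]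

lemma pOcc_isOcc {w : List A} {v : Fin (w.length + 1) → Fin n} (hv : Monotone v) :
    IsOcc (pOf w v) w (pOcc w v) := by
  constructor
  · intro j j' hlt
    rw [pOcc_eq hv, pOcc_eq hv]
    apply List.pairwise_iff_get.mp (incList_pairwise w v)
    simp only [Fin.lt_def, Fin.coe_cast]
    exact hlt
  · intro j
    rw [pOcc_eq hv]
    rw [List.get_of_eq (pOf_steps hv) j]
    simp [List.get_eq_getElem, List.getElem_map]

lemma wordFn_nonmono_zero {M : A → Matrix (Fin n) (Fin n) S}
    (hM : ∀ a, M a ∈ UT n S) {w : List A} {v : Fin (w.length + 1) → Fin n}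
    (hv : ¬ Monotone v) : wordFn M w v = 0 := by
  rw [Fin.monotone_iff_le_succ] at hv
  push_neg at hv
  obtain ⟨t, ht⟩ := hv
  apply Finset.prod_eq_zero (Finset.mem_univ t)
  exact hM (w.get t) (v t.castSucc) (v t.succ) ht

lemma wordFn_vq (M : A → Matrix (Fin n) (Fin n) S) {π : QPath n A} {w : List A}
    {p : Fin π.steps.length → Fin w.length} (hocc : IsOcc π w p) :
    wordFn M w (vq π p) = pathWt M π *
      MvPolynomial.eval (fun x : A × Fin n => M x.1 x.2 x.2) (occMonomial S π w p) := by
  have hp := isOcc_strictMono hocc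
  rw [wordFn,
    ← Finset.prod_filter_mul_prod_filter_not Finset.univ (fun t : Fin w.length => ∃ j, p j = t)]
  congr 1
  · have himg : Finset.univ.filter (fun t : Fin w.length => ∃ j, p j = t) =
        Finset.univ.image p := by
      ext t
      simp
    rw [himg, Finset.prod_image (fun a _ b _ h => hp.injective h), pathWt]
    apply Finset.prod_congr rfl
    intro j _
    rw [hocc.2 j]
    rw [vq_eq, vq_eq]
    rw [show (((p j).castSucc : Fin (w.length + 1)) : ℕ) = ((p j) : ℕ) from rfl]
    rw [show (((p j).succ : Fin (w.length + 1)) : ℕ) = ((p j) : ℕ) + 1 from rfl]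
    rw [cnt_apply hp j]
    rw [cnt_apply_succ hp j]
  · rw [occMonomial, map_prod, Finset.prod_filter]
    apply Finset.prod_congr rfl
    intro t _
    by_cases h : ∃ j, p j = t
    · rw [if_neg (not_not_intro h), if_pos h]
      exact (map_one _).symm
    · have hno : ∀ j, p j ≠ t := fun j hc => h ⟨j, hc⟩
      have hcc : (Finset.univ.filter (fun j => p j < t)).card = cnt p (t : ℕ) := by
        rw [cnt]
        congr 1
      rw [if_pos h, if_neg h, MvPolynomial.eval_X]
      rw [vq_eq, vq_eq]
      rw [show ((t.castSucc : Fin (w.length + 1)) : ℕ) = (t : ℕ) from rfl]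
      rw [show ((t.succ : Fin (w.length + 1)) : ℕ) = (t : ℕ) + 1 from rfl]
      rw [cnt_no p hno]
      rw [hcc]

end Aux6
section Aux7
attribute [local instance] Classical.propDecidable
open Finset

variable {S : Type*} [CommSemiring S] {n : ℕ} {A : Type*}

/-- The set of monotone vertex sequences from `i` to `j`. -/
def Vset (w : List A) (i j : Fin n) : Finset (Fin (w.length + 1) → Fin n) :=
  Finset.univ.filter
    (fun v => (v 0 = i ∧ v (Fin.last w.length) = j) ∧ Monotone v)

lemma mem_Vset {w : List A} {i j : Fin n} {v : Fin (w.length + 1) → Fin n} :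
    v ∈ Vset w i j ↔ (v 0 = i ∧ v (Fin.last w.length) = j) ∧ Monotone v := by
  rw [Vset, Finset.mem_filter]
  simp

lemma main_entry (M : A → Matrix (Fin n) (Fin n) S) (hM : ∀ a, M a ∈ UT n S)
    (w : List A) (i j : Fin n) :
    ((w.map M).prod) i j = ∑ π ∈ (Vset w i j).image (pOf w),
      pathWt M π *
        MvPolynomial.eval (fun x : A × Fin n => M x.1 x.2 x.2) (fPoly S π w) := by
  rw [entry_eq_sum]
  rw [show (∑ v : Fin (w.length + 1) → Fin n,
      if v 0 = i ∧ v (Fin.last w.length) = j then wordFn M w v else 0) =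
      ∑ v ∈ Finset.univ.filter
        (fun v : Fin (w.length + 1) → Fin n => v 0 = i ∧ v (Fin.last w.length) = j),
        wordFn M w v from (Finset.sum_filter _ _).symm]
  have hsub : Vset w i j ⊆ Finset.univ.filter
      (fun v : Fin (w.length + 1) → Fin n => v 0 = i ∧ v (Fin.last w.length) = j) := by
    intro v hv
    rw [mem_Vset] at hv
    rw [Finset.mem_filter]
    exact ⟨Finset.mem_univ _, hv.1⟩
  trans (∑ v ∈ Vset w i j, wordFn M w v)
  · refine (Finset.sum_subset hsub ?_).symm
    intro v hv hnv
    apply wordFn_nonmono_zero hM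
    intro hmono
    apply hnv
    rw [Finset.mem_filter] at hv
    exact mem_Vset.mpr ⟨hv.2, hmono⟩
  trans (∑ x ∈ ((Vset w i j).image (pOf w)).sigma
      (fun π => Finset.univ.filter (IsOcc π w)),
      pathWt M x.1 *
        MvPolynomial.eval (fun x : A × Fin n => M x.1 x.2 x.2) (occMonomial S x.1 w x.2))
  · apply Finset.sum_nbij'
      (i := fun v => (⟨pOf w v, pOcc w v⟩ :
        Σ π : QPath n A, (Fin π.steps.length → Fin w.length)))
      (j := fun x => vq x.1 x.2)
    · intro v hv
      have hm : Monotone v := (mem_Vset.mp hv).2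
      exact Finset.mem_sigma.mpr ⟨Finset.mem_image_of_mem _ hv,
        Finset.mem_filter.mpr ⟨Finset.mem_univ _, pOcc_isOcc hm⟩⟩
    · rintro ⟨π, p⟩ hx
      rw [Finset.mem_sigma] at hx
      obtain ⟨hπ, hoccm⟩ := hx
      have hocc : IsOcc π w p := (Finset.mem_filter.mp hoccm).2
      obtain ⟨v0, hv0, hpv0'⟩ := Finset.mem_image.mp hπ
      have hpv0 : pOf w v0 = π := hpv0'
      have hm0 : Monotone v0 := (mem_Vset.mp hv0).2
      have hs : π.start = i := by
        rw [← hpv0, pOf_start]; exact (mem_Vset.mp hv0).1.1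
      have hl : π.last = j := by
        rw [← hpv0, pOf_last hm0]; exact (mem_Vset.mp hv0).1.2
      refine mem_Vset.mpr ⟨⟨?_, ?_⟩, vq_monotone π p⟩
      · rw [vq_zero, hs]
      · rw [vq_last, hl]
    · intro v hv
      exact vq_pOcc (mem_Vset.mp hv).2
    · rintro ⟨π, p⟩ hx
      rw [Finset.mem_sigma] at hx
      have hocc : IsOcc π w p := (Finset.mem_filter.mp hx.2).2
      have h1 : pOf w (vq π p) = π := pOf_vq hocc
      apply Sigma.ext
      · exact h1
      · show HEq (pOcc w (vq π p)) p
        have hk : (pOf w (vq π p)).steps.length = π.steps.length := by rw [h1]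
        rw [Fin.heq_fun_iff hk]
        intro jj
        rw [pOcc_eq (vq_monotone π p), List.get_of_eq (incList_vq hocc),
          List.get_ofFn]
        apply congrArg p
        apply Fin.ext
        simp
    · intro v hv
      have hm : Monotone v := (mem_Vset.mp hv).2
      conv_lhs => rw [← vq_pOcc hm]
      exact wordFn_vq M (pOcc_isOcc hm)
  · rw [Finset.sum_sigma]
    apply Finset.sum_congr rfl
    intro π _
    rw [fPoly, map_sum, Finset.mul_sum]

lemma fPoly_eq_zero {w : List A} {i j : Fin n} {π : QPath n A}
    (hs : π.start = i) (hl : π.last = j)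
    (hnot : π ∉ (Vset w i j).image (pOf w)) : fPoly S π w = 0 := by
  rw [fPoly]
  have hempty : (Finset.univ.filter (IsOcc π w)) = ∅ := by
    rw [Finset.filter_eq_empty_iff]
    intro p _ hocc
    apply hnot
    refine Finset.mem_image.mpr ⟨vq π p, ?_, pOf_vq hocc⟩
    refine mem_Vset.mpr ⟨⟨?_, ?_⟩, vq_monotone π p⟩
    · rw [vq_zero, hs]
    · rw [vq_last, hl]
  rw [hempty, Finset.sum_empty]

end Aux7
/-- For a commutative semiring `S` (with `0 ≠ 1`), `n ≥ 1` and an alphabet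
`A`, the monoid identity `u = w` holds in `UT_n(S)` if and only if for every path `π` in
`Γ_{n,A}` the formal polynomials `f_π^u` and `f_π^w` are equal as polynomial functions
over `S`. -/
theorem freeobj_identity_iff_polynomials {S : Type*} [CommSemiring S] [Nontrivial S]
    {n : ℕ} (hn : 1 ≤ n) {A : Type*} (u w : FreeMonoid A) :
    (∀ φ : FreeMonoid A →* (UT n S), φ u = φ w) ↔
      (∀ π : QPath n A, ∀ ν : A × Fin n → S,
        MvPolynomial.eval ν (fPoly S π (FreeMonoid.toList u)) =
          MvPolynomial.eval ν (fPoly S π (FreeMonoid.toList w))) := by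
  classical
  constructor
  · -- identity implies polynomial equality
    intro hid π ν
    -- witness matrices
    set M : A → Matrix (Fin n) (Fin n) S := fun a => Matrix.of (fun b c =>
      if b = c then ν (a, b)
      else if ∃ s : Fin π.steps.length,
          (π.steps.get s).1 = a ∧ π.vtx (s : ℕ) = b ∧ π.vtx ((s : ℕ) + 1) = c
        then 1 else 0) with hMdef
    have hMapp : ∀ a b c, M a b c =
        (if b = c then ν (a, b)
        else if ∃ s : Fin π.steps.length,
            (π.steps.get s).1 = a ∧ π.vtx (s : ℕ) = b ∧ π.vtx ((s : ℕ) + 1) = c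
          then 1 else 0) := fun a b c => rfl
    have hM : ∀ a, M a ∈ UT n S := by
      intro a b c hlt
      show M a b c = 0
      rw [hMapp, if_neg (ne_of_gt hlt), if_neg]
      rintro ⟨s, -, rfl, rfl⟩
      exact absurd (π.vtx_lt_vtx (Nat.lt_succ_self (s : ℕ)) s.isLt) (not_lt_of_gt hlt)
    have hν : (fun y : A × Fin n => M y.1 y.2 y.2) = ν := by
      funext y
      rw [hMapp, if_pos rfl]
    -- the homomorphism
    set φ : FreeMonoid A →* UT n S :=
      FreeMonoid.lift (fun a => (⟨M a, hM a⟩ : UT n S)) with hφ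
    have hmat : ∀ x : FreeMonoid A,
        ((φ x : UT n S) : Matrix (Fin n) (Fin n) S) =
          ((FreeMonoid.toList x).map M).prod := by
      intro x
      rw [hφ, FreeMonoid.lift_apply, SubmonoidClass.coe_list_prod, List.map_map]
      rfl
    have hentry := congrArg
      (fun X : UT n S => ((X : Matrix (Fin n) (Fin n) S)) π.start π.last) (hid φ)
    simp only [hmat] at hentry
    rw [main_entry M hM (FreeMonoid.toList u) π.start π.last,
      main_entry M hM (FreeMonoid.toList w) π.start π.last] at hentry
    -- weights of foreign paths vanish
    have key : ∀ π' : QPath n A, π'.start = π.start → π'.last = π.last →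
        π' ≠ π → pathWt M π' = 0 := by
      intro π' h1 h2 hne
      by_contra h0
      apply hne
      have hfac : ∀ r : Fin π'.steps.length,
          (M ((π'.steps.get r).1)) (π'.vtx (r : ℕ)) (π'.vtx ((r : ℕ) + 1)) ≠ 0 := by
        intro r hz
        exact h0 (Finset.prod_eq_zero (Finset.mem_univ r) hz)
      have hstep : ∀ r : Fin π'.steps.length, ∃ s : Fin π.steps.length,
          (π.steps.get s).1 = (π'.steps.get r).1 ∧ π.vtx (s : ℕ) = π'.vtx (r : ℕ) ∧
            π.vtx ((s : ℕ) + 1) = π'.vtx ((r : ℕ) + 1) := by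
        intro r
        have hlt : π'.vtx (r : ℕ) < π'.vtx ((r : ℕ) + 1) :=
          π'.vtx_lt_vtx (Nat.lt_succ_self _) r.isLt
        have hf := hfac r
        rw [hMapp, if_neg (ne_of_lt hlt)] at hf
        by_contra hno
        apply hf
        rw [if_neg hno]
      have hch : ∀ r : ℕ, r ≤ π'.steps.length →
          r ≤ π.steps.length ∧ π'.vtx r = π.vtx r := by
        intro r
        induction r with
        | zero =>
          intro _
          refine ⟨Nat.zero_le _, ?_⟩
          rw [π'.vtx_zero, π.vtx_zero, h1]
        | succ r ih =>
          intro hr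
          obtain ⟨hrk, hv⟩ := ih (by omega)
          obtain ⟨s, hs1, hs2, hs3⟩ := hstep ⟨r, by omega⟩
          have hsr : (s : ℕ) = r := by
            apply π.vtx_injOn (le_of_lt s.isLt) hrk
            rw [hs2]
            exact hv
          constructor
          · have := s.isLt
            omega
          · have : π'.vtx (r + 1) = π.vtx ((s : ℕ) + 1) := hs3.symm
            rw [this, hsr]
      have hklk : π'.steps.length = π.steps.length := by
        obtain ⟨hle, hv⟩ := hch π'.steps.length (le_refl _)
        rcases eq_or_lt_of_le hle with he | hlt'
        · exact he
        · exfalso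
          have h3 : π.vtx π'.steps.length = π.vtx π.steps.length := by
            rw [← hv]
            calc π'.vtx π'.steps.length = π'.last := rfl
            _ = π.last := h2
            _ = π.vtx π.steps.length := rfl
          have := π.vtx_injOn (le_of_lt hlt') (le_refl _) h3
          omega
      apply QPath.ext' h1
      apply List.ext_get hklk
      intro idx hi1 hi2
      obtain ⟨s, hs1, hs2, hs3⟩ := hstep ⟨idx, hi1⟩
      have hvx : π'.vtx idx = π.vtx idx := (hch idx (le_of_lt hi1)).2
      have hsr : (s : ℕ) = idx := by
        apply π.vtx_injOn (le_of_lt s.isLt) (by omega)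
        rw [hs2]
        exact hvx
      refine Prod.ext ?_ ?_
      · have hse : s = (⟨idx, hi2⟩ : Fin π.steps.length) := Fin.ext hsr
        rw [← hs1, hse]
      · rw [← π'.vtx_succ_get hi1, ← π.vtx_succ_get hi2]
        exact (hch (idx + 1) (by omega)).2
    have hpw1 : pathWt M π = 1 := by
      rw [pathWt]
      apply Finset.prod_eq_one
      intro r _
      have hlt : π.vtx (r : ℕ) < π.vtx ((r : ℕ) + 1) :=
        π.vtx_lt_vtx (Nat.lt_succ_self _) r.isLt
      rw [hMapp, if_neg (ne_of_lt hlt), if_pos ⟨r, rfl, rfl, rfl⟩]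
    have reduce : ∀ x : List A,
        (∑ π' ∈ (Vset x π.start π.last).image (pOf x),
          pathWt M π' * MvPolynomial.eval (fun y : A × Fin n => M y.1 y.2 y.2)
            (fPoly S π' x)) = MvPolynomial.eval ν (fPoly S π x) := by
      intro x
      rw [hν]
      have hep : ∀ π' ∈ (Vset x π.start π.last).image (pOf x),
          π'.start = π.start ∧ π'.last = π.last := by
        intro π' hπ'
        obtain ⟨v0, hv0, rfl⟩ := Finset.mem_image.mp hπ'
        have hm := (mem_Vset.mp hv0).2
        refine ⟨?_, ?_⟩
        · rw [pOf_start]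
          exact (mem_Vset.mp hv0).1.1
        · rw [pOf_last hm]
          exact (mem_Vset.mp hv0).1.2
      by_cases hmem : π ∈ (Vset x π.start π.last).image (pOf x)
      · rw [Finset.sum_eq_single_of_mem π hmem]
        · rw [hpw1, one_mul]
        · intro π' hπ' hne
          rw [key π' (hep π' hπ').1 (hep π' hπ').2 hne, zero_mul]
      · rw [Finset.sum_eq_zero, eq_comm]
        · rw [fPoly_eq_zero rfl rfl hmem, map_zero]
        · intro π' hπ'
          have hne : π' ≠ π := fun he => hmem (he ▸ hπ')
          rw [key π' (hep π' hπ').1 (hep π' hπ').2 hne, zero_mul]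
    rw [reduce (FreeMonoid.toList u), reduce (FreeMonoid.toList w)] at hentry
    exact hentry
  · -- polynomial equality implies identity
    intro hpoly φ
    set M : A → Matrix (Fin n) (Fin n) S :=
      fun a => ((φ (FreeMonoid.of a) : UT n S) : Matrix (Fin n) (Fin n) S) with hMdef
    have hM : ∀ a, M a ∈ UT n S := fun a => (φ (FreeMonoid.of a)).2
    have hmat : ∀ x : FreeMonoid A,
        ((φ x : UT n S) : Matrix (Fin n) (Fin n) S) =
          ((FreeMonoid.toList x).map M).prod := by
      intro x
      have hφeq : φ = FreeMonoid.lift (fun a => φ (FreeMonoid.of a)) :=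
        FreeMonoid.hom_eq (fun a => by rw [FreeMonoid.lift_eval_of])
      conv_lhs => rw [hφeq]
      rw [FreeMonoid.lift_apply, SubmonoidClass.coe_list_prod, List.map_map]
      rfl
    apply Subtype.ext
    apply Matrix.ext
    intro i j
    have hu := hmat u
    have hw := hmat w
    calc ((φ u : UT n S) : Matrix (Fin n) (Fin n) S) i j
        = ((FreeMonoid.toList u).map M).prod i j := by rw [hu]
      _ = ((FreeMonoid.toList w).map M).prod i j := ?_
      _ = ((φ w : UT n S) : Matrix (Fin n) (Fin n) S) i j := by rw [hw]
    rw [main_entry M hM (FreeMonoid.toList u) i j,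
      main_entry M hM (FreeMonoid.toList w) i j]
    set Tu := (Vset (FreeMonoid.toList u) i j).image (pOf (FreeMonoid.toList u)) with hTu
    set Tw := (Vset (FreeMonoid.toList w) i j).image (pOf (FreeMonoid.toList w)) with hTw
    have hep : ∀ π' ∈ Tu ∪ Tw, π'.start = i ∧ π'.last = j := by
      intro π' hπ'
      rcases Finset.mem_union.mp hπ' with h | h <;>
      · obtain ⟨v0, hv0, rfl⟩ := Finset.mem_image.mp h
        have hm := (mem_Vset.mp hv0).2
        refine ⟨?_, ?_⟩
        · rw [pOf_start]
          exact (mem_Vset.mp hv0).1.1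
        · rw [pOf_last hm]
          exact (mem_Vset.mp hv0).1.2
    have h1 : (∑ π' ∈ Tu, pathWt M π' *
        MvPolynomial.eval (fun y : A × Fin n => M y.1 y.2 y.2)
          (fPoly S π' (FreeMonoid.toList u))) = ∑ π' ∈ Tu ∪ Tw, pathWt M π' *
        MvPolynomial.eval (fun y : A × Fin n => M y.1 y.2 y.2)
          (fPoly S π' (FreeMonoid.toList u)) := by
      apply Finset.sum_subset Finset.subset_union_left
      intro π' hπ' hnot
      rw [fPoly_eq_zero (hep π' hπ').1 (hep π' hπ').2 hnot, map_zero, mul_zero]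
    have h2 : (∑ π' ∈ Tw, pathWt M π' *
        MvPolynomial.eval (fun y : A × Fin n => M y.1 y.2 y.2)
          (fPoly S π' (FreeMonoid.toList w))) = ∑ π' ∈ Tu ∪ Tw, pathWt M π' *
        MvPolynomial.eval (fun y : A × Fin n => M y.1 y.2 y.2)
          (fPoly S π' (FreeMonoid.toList w)) := by
      apply Finset.sum_subset Finset.subset_union_right
      intro π' hπ' hnot
      rw [fPoly_eq_zero (hep π' hπ').1 (hep π' hπ').2 hnot, map_zero, mul_zero]
    rw [h1, h2]
    apply Finset.sum_congr rfl
    intro π' _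
    rw [hpoly π' (fun y : A × Fin n => M y.1 y.2 y.2)]
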